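/- For every ordinal δ of cardinality at most continuum, there exists a strictly increasing chain ⟨F_α : α < δ⟩ of ultrafilters on the positive natural numbers under the relation ∼∣ (strictly increasing meaning F_β ∼∣ F_α and F_α ̸∼∣ F_β for β < α). -/

import Mathlib

/-- A set of positive naturals is upward closed under divisibility. -/
def upClosed (A : Set ℕ+) : Prop := ∀ a ∈ A, ∀ n : ℕ+, a ∣ n → n ∈ A

/-- The divisibility relation `∼∣` on ultrafilters: `F ∩ U ⊆ G`. -/
def sdvd (F G : Ultrafilter ℕ+) : Prop := ∀ A : Set ℕ+, A ∈ F → upClosed A → A ∈ G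

/-- The product ultrafilter: `A ∈ F·G ↔ {n | {m | m*n ∈ A} ∈ G} ∈ F`. -/
def mulUF (F G : Ultrafilter ℕ+) : Ultrafilter ℕ+ :=
  F.bind (fun n => G.map (fun m => m * n))

/-- `D(F) = {A | {n | nℕ₊ ⊆ A} ∈ F}`. -/
def DF (F : Ultrafilter ℕ+) : Set (Set ℕ+) :=
  {A | {n : ℕ+ | ∀ m : ℕ+, n * m ∈ A} ∈ F}

/-- A strong antichain: pairwise coprime elements. -/
def strongAntichain (X : Set ℕ+) : Prop :=
  X.Pairwise (fun a b => Nat.Coprime (a : ℕ) (b : ℕ))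

/-- An N-free ultrafilter contains no `nℕ₊` with `n ≠ 1`. -/
def NfreeUF (F : Ultrafilter ℕ+) : Prop :=
  ∀ n : ℕ+, n ≠ 1 → {m : ℕ+ | n ∣ m} ∉ F

/- ------------------ auxiliary constructions ------------------ -/

/-- a sequence of primes coded by prefixes of `x`. -/
noncomputable def pSeq (x : ℕ → Bool) (n : ℕ) : ℕ+ :=
  ⟨Nat.nth Nat.Prime (Encodable.encode (List.ofFn fun i : Fin n => x i)),
   (Nat.nth_mem_of_infinite Nat.infinite_setOf_prime _).pos⟩

theorem pSeq_prime (x : ℕ → Bool) (n : ℕ) : Nat.Prime ((pSeq x n : ℕ)) :=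
  Nat.nth_mem_of_infinite Nat.infinite_setOf_prime _

theorem pSeq_eq {x y : ℕ → Bool} {n m : ℕ} (h : pSeq x n = pSeq y m) :
    n = m ∧ ∀ i : Fin n, x i = y i := by
  have h1 : Nat.nth Nat.Prime (Encodable.encode (List.ofFn fun i : Fin n => x i)) =
      Nat.nth Nat.Prime (Encodable.encode (List.ofFn fun i : Fin m => y i)) :=
    congrArg (fun t : ℕ+ => (t : ℕ)) h
  have h2 := Nat.nth_injective Nat.infinite_setOf_prime h1
  have h3 := Encodable.encode_injective h2
  have hnm : n = m := by
    have := congrArg List.length h3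
    simpa using this
  subst hnm
  refine ⟨rfl, ?_⟩
  have h4 := List.ofFn_injective h3
  intro i
  exact congrFun h4 i

/-- the up-closed "divisible by some prime of the family" set. -/
def Yset (q : Ordinal → ℕ → ℕ+) (β : Ordinal) : Set ℕ+ := {k | ∃ n, q β n ∣ k}

theorem upClosed_Yset (q : Ordinal → ℕ → ℕ+) (β : Ordinal) : upClosed (Yset q β) := by
  rintro a ⟨n, hn⟩ k hak
  exact ⟨n, hn.trans hak⟩

/-- the family of generators for the `α`-th ultrafilter in the chain. -/
def fam (q : Ordinal → ℕ → ℕ+) (δ α : Ordinal)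
    (g : ∀ β : Ordinal, β < α → Ultrafilter ℕ+) : Set (Set ℕ+) :=
  {A | (upClosed A ∧ ∃ β, ∃ h : β < α, A ∈ g β h) ∨
       (∃ β, β < α ∧ A = Yset q β) ∨
       (∃ γ, α ≤ γ ∧ γ < δ ∧ A = (Yset q γ)ᶜ)}

open Classical in
noncomputable def chainUF (q : Ordinal → ℕ → ℕ+) (δ : Ordinal) (α : Ordinal) :
    Ultrafilter ℕ+ :=
  if h : (Filter.generate (fam q δ α (fun β _ => chainUF q δ β))).NeBot then
    (@Ultrafilter.exists_le _ _ h).choose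
  else pure 1
termination_by α
decreasing_by all_goals assumption

theorem chain_key (q : Ordinal → ℕ → ℕ+) (δ : Ordinal)
    (hprime : ∀ β n, Nat.Prime ((q β n : ℕ)))
    (hsep : ∀ β γ, β < δ → γ < δ → β ≠ γ → ∃ N, ∀ n, N ≤ n → ∀ m, q β n ≠ q γ m) :
    ∀ α, α < δ → ∀ A ∈ fam q δ α (fun β _ => chainUF q δ β), A ∈ chainUF q δ α := by
  intro α
  induction α using Ordinal.induction with
  | h α IH =>
    intro hαδ A hA
    -- the generating family has the finite intersection property
    have hfip : ∀ t ⊆ fam q δ α (fun β _ => chainUF q δ β), t.Finite → (⋂₀ t).Nonempty := by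
      intro t ht htfin
      classical
      set ft : Finset (Set ℕ+) := htfin.toFinset with hft
      set S1 : Set (Set ℕ+) := {A | upClosed A ∧ ∃ β, ∃ h : β < α, A ∈ chainUF q δ β} with hS1
      set t1 : Finset (Set ℕ+) := ft.filter (fun A => A ∈ S1) with ht1
      set t2 : Finset (Set ℕ+) := (ft \ t1).filter (fun A => ∃ β, β < α ∧ A = Yset q β) with ht2
      set t3 : Finset (Set ℕ+) := ft \ (t1 ∪ t2) with ht3
      -- choice for t1
      have hb : ∀ A : Set ℕ+, ∃ β, A ∈ t1 → β < α ∧ A ∈ chainUF q δ β := by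
        intro A
        by_cases h : A ∈ t1
        · rw [ht1, Finset.mem_filter] at h
          obtain ⟨-, -, β, hβ, hmem⟩ := h
          exact ⟨β, fun _ => ⟨hβ, hmem⟩⟩
        · exact ⟨0, fun hc => absurd hc h⟩
      choose bfun hbfun using hb
      -- choice for t2
      have hb2 : ∀ A : Set ℕ+, ∃ β, A ∈ t2 → β < α ∧ A = Yset q β := by
        intro A
        by_cases h : A ∈ t2
        · rw [ht2, Finset.mem_filter] at h
          obtain ⟨-, β, hβ, hEq⟩ := h
          exact ⟨β, fun _ => ⟨hβ, hEq⟩⟩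
        · exact ⟨0, fun hc => absurd hc h⟩
      choose b2fun hb2fun using hb2
      -- choice for t3
      have hc3 : ∀ A : Set ℕ+, ∃ γ, A ∈ t3 → α ≤ γ ∧ γ < δ ∧ A = (Yset q γ)ᶜ := by
        intro A
        by_cases h : A ∈ t3
        · have hAt : A ∈ t := by
            rw [ht3, Finset.mem_sdiff] at h
            exact (Set.Finite.mem_toFinset htfin).mp h.1
          rcases ht hAt with hcase | hcase | hcase
          · exfalso
            rw [ht3, Finset.mem_sdiff] at h
            exact h.2 (Finset.mem_union_left _ (by
              rw [ht1, Finset.mem_filter]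
              exact ⟨(Set.Finite.mem_toFinset htfin).mpr hAt, hcase⟩))
          · exfalso
            rw [ht3, Finset.mem_sdiff] at h
            apply h.2
            by_cases h1 : A ∈ t1
            · exact Finset.mem_union_left _ h1
            · refine Finset.mem_union_right _ ?_
              rw [ht2, Finset.mem_filter, Finset.mem_sdiff]
              exact ⟨⟨(Set.Finite.mem_toFinset htfin).mpr hAt, h1⟩, hcase⟩
          · obtain ⟨γ, hγ1, hγ2, hγ3⟩ := hcase
            exact ⟨γ, fun _ => ⟨hγ1, hγ2, hγ3⟩⟩
        · exact ⟨0, fun hc => absurd hc h⟩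
      choose cfun hcfun using hc3
      -- a base point in all t1-sets and all t3-sets
      have hkey : ∃ a : ℕ+, (∀ A ∈ t1, a ∈ A) ∧ (∀ A ∈ t3, a ∈ A) := by
        rcases eq_zero_or_pos α with hα0 | hα0
        · refine ⟨1, fun A hA1 => absurd ((hbfun A hA1).1) (by
            rw [hα0]; exact fun hlt => not_lt_zero hlt), fun A hA3 => ?_⟩
          obtain ⟨hγ1, hγ2, hEq⟩ := hcfun A hA3
          rw [hEq]
          rintro ⟨n, hn⟩
          have : ((q (cfun A) n : ℕ)) ∣ 1 := PNat.dvd_iff.mp hn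
          exact (Nat.Prime.ne_one (hprime _ _)) (Nat.eq_one_of_dvd_one this)
        · -- β* bound
          have hβsα : t1.sup bfun < α := by
            refine Finset.sup_lt_iff hα0 |>.mpr ?_
            intro A hA1
            exact (hbfun A hA1).1
          -- all t1 and t3 sets are in chainUF βs
          have hall : ∀ A, (A ∈ t1 ∨ A ∈ t3) → A ∈ chainUF q δ (t1.sup bfun) := by
            rintro A (hA1 | hA3)
            · obtain ⟨hβA, hmem⟩ := hbfun A hA1
              rcases eq_or_lt_of_le (Finset.le_sup (f := bfun) hA1) with hEq | hlt
              · rwa [← hEq]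
              · refine IH _ hβsα (hβsα.trans hαδ) A ?_
                refine Or.inl ⟨?_, bfun A, hlt, hmem⟩
                rw [ht1, Finset.mem_filter, hS1] at hA1
                exact hA1.2.1
            · obtain ⟨hγ1, hγ2, hEq⟩ := hcfun A hA3
              refine IH _ hβsα (hβsα.trans hαδ) A ?_
              exact Or.inr (Or.inr ⟨cfun A, le_of_lt (lt_of_lt_of_le hβsα hγ1), hγ2, hEq⟩)
          have hB : (⋂₀ ((t1 ∪ t3 : Finset (Set ℕ+)) : Set (Set ℕ+))) ∈ chainUF q δ (t1.sup bfun) := by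
            rw [← Ultrafilter.mem_coe,
              Filter.sInter_mem ((t1 ∪ t3 : Finset (Set ℕ+)).finite_toSet)]
            intro U hU
            rw [Finset.coe_union, Set.mem_union] at hU
            exact hall U (by simpa using hU)
          obtain ⟨a, ha⟩ := Ultrafilter.nonempty_of_mem hB
          rw [Set.mem_sInter] at ha
          exact ⟨a, fun A hA1 => ha A (by simp [hA1]), fun A hA3 => ha A (by simp [hA3])⟩
      obtain ⟨a, ha1, ha3⟩ := hkey
      -- choose prime indices for t2 avoiding all t3 families
      have hN : ∀ A A' : Set ℕ+, ∃ N, A ∈ t2 → A' ∈ t3 →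
          ∀ n, N ≤ n → ∀ m, q (b2fun A) n ≠ q (cfun A') m := by
        intro A A'
        by_cases h : A ∈ t2 ∧ A' ∈ t3
        · obtain ⟨hA2, hA3⟩ := h
          have h1 := hb2fun A hA2
          have h2 := hcfun A' hA3
          have hβδ : b2fun A < δ := lt_trans h1.1 hαδ
          have hγδ : cfun A' < δ := h2.2.1
          have hne : b2fun A ≠ cfun A' := ne_of_lt (lt_of_lt_of_le h1.1 h2.1)
          obtain ⟨N, hN⟩ := hsep _ _ hβδ hγδ hne
          exact ⟨N, fun _ _ => hN⟩
        · exact ⟨0, fun h1 h2 => absurd ⟨h1, h2⟩ h⟩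
      choose Nfun hNfun using hN
      set nfun : Set ℕ+ → ℕ := fun A => t3.sup (Nfun A) with hnfun
      set k : ℕ+ := a * ∏ A ∈ t2, q (b2fun A) (nfun A) with hk
      refine ⟨k, ?_⟩
      rw [Set.mem_sInter]
      intro A hAt
      have hAft : A ∈ ft := (Set.Finite.mem_toFinset htfin).mpr hAt
      by_cases hA1 : A ∈ t1
      · -- up-closed, contains a, a ∣ k
        have hup : upClosed A := by
          rw [ht1, Finset.mem_filter, hS1] at hA1
          exact hA1.2.1
        exact hup a (ha1 A hA1) k ⟨_, rfl⟩
      by_cases hA2 : A ∈ t2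
      · obtain ⟨hβ, hEq⟩ := hb2fun A hA2
        rw [hEq]
        refine ⟨nfun A, ?_⟩
        exact dvd_mul_of_dvd_right (Finset.dvd_prod_of_mem _ hA2) a
      · have hA3 : A ∈ t3 := by
          rw [ht3, Finset.mem_sdiff, Finset.mem_union]
          exact ⟨hAft, fun h => h.elim hA1 hA2⟩
        obtain ⟨hγ1, hγ2, hEq⟩ := hcfun A hA3
        rw [hEq]
        rintro ⟨m, hm⟩
        -- q (cfun A) m ∣ k, prime, so divides a or one of the t2 primes
        have hdvd : ((q (cfun A) m : ℕ)) ∣ (a : ℕ) * ∏ A' ∈ t2, ((q (b2fun A') (nfun A') : ℕ)) := by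
          have : ((q (cfun A) m : ℕ)) ∣ ((k : ℕ)) := PNat.dvd_iff.mp hm
          have hcast : ((∏ A' ∈ t2, q (b2fun A') (nfun A') : ℕ+) : ℕ)
              = ∏ A' ∈ t2, ((q (b2fun A') (nfun A') : ℕ)) := by
            simpa using map_prod PNat.coeMonoidHom (fun A' => q (b2fun A') (nfun A')) t2
          rwa [hk, PNat.mul_coe, hcast] at this
        have hp := hprime (cfun A) m
        rcases (Nat.Prime.dvd_mul hp).mp hdvd with hda | hdp
        · have haY : a ∈ (Yset q (cfun A))ᶜ := hEq ▸ ha3 A hA3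
          exact haY ⟨m, PNat.dvd_iff.mpr hda⟩
        · obtain ⟨A', hA'2, hdvd'⟩ := (Prime.dvd_finset_prod_iff hp.prime _).mp hdp
          have heq : ((q (cfun A) m : ℕ)) = ((q (b2fun A') (nfun A') : ℕ)) :=
            (Nat.prime_dvd_prime_iff_eq hp (hprime _ _)).mp hdvd'
          have heq' : q (b2fun A') (nfun A') = q (cfun A) m := PNat.coe_injective heq.symm
          exact hNfun A' A hA'2 hA3 (nfun A') (Finset.le_sup hA3) m heq'
    have hne : (Filter.generate (fam q δ α (fun β _ => chainUF q δ β))).NeBot :=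
      Filter.generate_neBot_iff.mpr hfip
    have hgen : A ∈ Filter.generate (fam q δ α (fun β _ => chainUF q δ β)) :=
      Filter.mem_generate_of_mem hA
    rw [chainUF, dif_pos hne]
    exact (@Ultrafilter.exists_le _ _ hne).choose_spec hgen

theorem exists_long_chain (δ : Ordinal) (hδ : δ.card ≤ Cardinal.continuum) :
    ∃ F : {α : Ordinal // α < δ} → Ultrafilter ℕ+,
      ∀ a b : {α : Ordinal // α < δ}, a.1 < b.1 →
        sdvd (F a) (F b) ∧ ¬ sdvd (F b) (F a) := by
  classical
  -- get an injection from {α // α < δ} into ℕ → Bool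
  obtain ⟨e⟩ : Nonempty ({α : Ordinal // α < δ} ↪ ULift (ℕ → Bool)) := by
    rw [← Cardinal.le_def, Cardinal.mk_uLift]
    have h1 : Cardinal.mk {α : Ordinal // α < δ} = Cardinal.mk (Set.Iio δ) := rfl
    rw [h1, Ordinal.mk_Iio_ordinal]
    have h2 : Cardinal.mk (ℕ → Bool) = Cardinal.continuum := by
      simp [Cardinal.mk_arrow, Cardinal.two_power_aleph0]
    refine le_trans (Cardinal.lift_le.mpr hδ) ?_
    rw [h2, Cardinal.lift_continuum, Cardinal.lift_continuum]
  set x : Ordinal → ℕ → Bool := fun β =>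
    if h : β < δ then (e ⟨β, h⟩).down else (fun _ => false) with hx
  set q : Ordinal → ℕ → ℕ+ := fun β => pSeq (x β) with hq
  have hprime : ∀ β n, Nat.Prime ((q β n : ℕ)) := fun β n => pSeq_prime _ _
  have hsep : ∀ β γ, β < δ → γ < δ → β ≠ γ → ∃ N, ∀ n, N ≤ n → ∀ m, q β n ≠ q γ m := by
    intro β γ hβ hγ hne
    have hxne : x β ≠ x γ := by
      rw [hx]
      simp only [dif_pos hβ, dif_pos hγ]
      intro hEq
      exact hne (congrArg Subtype.val (e.injective (ULift.ext _ _ hEq)))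
    obtain ⟨i, hi⟩ : ∃ i, x β i ≠ x γ i := by
      by_contra hcon
      push_neg at hcon
      exact hxne (funext hcon)
    refine ⟨i + 1, fun n hn m hEqq => ?_⟩
    obtain ⟨hnm, hfun⟩ := pSeq_eq hEqq
    exact hi (hfun ⟨i, lt_of_lt_of_le (Nat.lt_succ_self i) hn⟩)
  have key := chain_key q δ hprime hsep
  refine ⟨fun a => chainUF q δ a.1, fun a b hab => ?_⟩
  constructor
  · intro A hAFa hup
    exact key b.1 b.2 A (Or.inl ⟨hup, a.1, hab, hAFa⟩)
  · intro hsd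
    have hY_in_b : Yset q a.1 ∈ chainUF q δ b.1 :=
      key b.1 b.2 _ (Or.inr (Or.inl ⟨a.1, hab, rfl⟩))
    have hY_notin_a : (Yset q a.1)ᶜ ∈ chainUF q δ a.1 :=
      key a.1 a.2 _ (Or.inr (Or.inr ⟨a.1, le_refl _, a.2, rfl⟩))
    have := hsd (Yset q a.1) hY_in_b (upClosed_Yset q a.1)
    exact (Ultrafilter.compl_mem_iff_notMem.mp hY_notin_a) this
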